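/- Let F be a Borel probability measure on [0,1] whose moments m_k(F) = ∫₀¹ x^k dF(x) satisfy ∑_{k=1}^∞ m_k(F) < ∞, and let p_1, …, p_n be independent random variables each with distribution F. Then the random variable T = ∑_{k=1}^∞ (1 − ∏_{i=1}^n (1 − p_i^k)) is integrable and E[T] = ∑_{k=1}^n (n choose k) (−1)^{k−1} ζ_F(k), where ζ_F(k) = ∑_{j=1}^∞ m_j(F)^k. -/

import Mathlib

open MeasureTheory ProbabilityTheory

/-- Expectation of a product of functions of independent random variables. -/
lemma indep_integral_prod {ι : Type*} {Ω : Type*} [MeasureSpace Ω]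
    [IsProbabilityMeasure (ℙ : Measure Ω)]
    (p : ι → Ω → ℝ) (hmeas : ∀ i, Measurable (p i))
    (hindep : iIndepFun p ℙ)
    (g : ι → ℝ → ℝ) (hg : ∀ i, Measurable (g i))
    (s : Finset ι) :
    ∫ ω, ∏ i ∈ s, g i (p i ω) ∂ℙ = ∏ i ∈ s, ∫ ω, g i (p i ω) ∂ℙ := by
  classical
  induction s using Finset.cons_induction with
  | empty => simp
  | cons a t ha ih =>
    have hdisj : Disjoint ({a} : Finset ι) t := by simpa using ha
    have h1 := hindep.indepFun_finset {a} t hdisj hmeas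
    set φ : (({a} : Finset ι) → ℝ) → ℝ := fun v => g a (v ⟨a, by simp⟩) with hφ
    set ψ : (↥t → ℝ) → ℝ := fun v => ∏ i : ↥t, g (i : ι) (v i) with hψ
    have hφm : Measurable φ := (hg a).comp (measurable_pi_apply _)
    have hψm : Measurable ψ :=
      Finset.measurable_prod _ fun i _ => (hg i).comp (measurable_pi_apply i)
    have h2 := (h1.comp hφm hψm)
    have hX : (φ ∘ fun ω (i : ({a} : Finset ι)) => p i ω) = fun ω => g a (p a ω) := rfl
    have hY : (ψ ∘ fun ω (i : ↥t) => p (i : ι) ω)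
        = fun ω => ∏ i ∈ t, g i (p i ω) := by
      funext ω
      simp only [Function.comp_apply, hψ]
      exact Finset.prod_coe_sort t (fun i => g i (p i ω))
    rw [hX, hY] at h2
    have hXm : AEStronglyMeasurable (fun ω => g a (p a ω)) ℙ :=
      ((hg a).comp (hmeas a)).aestronglyMeasurable
    have hYm : AEStronglyMeasurable (fun ω => ∏ i ∈ t, g i (p i ω)) ℙ :=
      (Finset.measurable_prod _ fun i _ => (hg i).comp (hmeas i)).aestronglyMeasurable
    have := IndepFun.integral_mul_eq_mul_integral h2 hXm hYm
    simp only [Finset.prod_cons]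
    rw [← ih]
    exact this

lemma one_sub_one_sub_pow (m : ℝ) (n : ℕ) :
    1 - (1 - m) ^ n = ∑ s ∈ Finset.Icc 1 n, (n.choose s : ℝ) * (-1) ^ (s - 1) * m ^ s := by
  have h : (1 - m) ^ n = ∑ k ∈ Finset.range (n + 1), (-m) ^ k * 1 ^ (n - k) * (n.choose k : ℝ) := by
    rw [← add_pow]; ring_nf
  rw [h, Finset.sum_range_succ', ← Finset.Ico_add_one_right_eq_Icc, Finset.sum_Ico_eq_sum_range]
  simp only [one_pow, mul_one, pow_zero, Nat.choose_zero_right, Nat.cast_one, one_mul,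
    Nat.add_sub_cancel, Nat.succ_sub_one]
  rw [sub_add_eq_sub_sub, sub_sub_cancel_left, ← Finset.sum_neg_distrib]
  refine Finset.sum_congr rfl fun i _ => ?_
  have h1 : (1 + i - 1) = i := by omega
  rw [h1, neg_pow]
  ring_nf

/-- Let `F` be a Borel probability measure on `[0,1]` whose moments
`m_j = ∫ t^j dF(t)` satisfy `∑_{j=1}^∞ m_j < ∞`, and let `p_1, …, p_n` be i.i.d. with
distribution `F`.  Then `T = ∑_{k=1}^∞ (1 − ∏_i (1 − p_i^k))` is integrable and
`E[T] = ∑_{k=1}^n C(n,k) (−1)^{k−1} ζ_F(k)`, with `ζ_F(k) = ∑_{j=1}^∞ m_j^k`. -/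
theorem batch_learner_expected_time_moment_zeta
    (μ : Measure ℝ) [IsProbabilityMeasure μ]
    (hsupp : μ (Set.Icc (0 : ℝ) 1)ᶜ = 0)
    (hsum : Summable (fun j : ℕ => ∫ t, t ^ (j + 1) ∂μ))
    (n : ℕ) (hn : 1 ≤ n)
    {Ω : Type*} [MeasureSpace Ω] [IsProbabilityMeasure (ℙ : Measure Ω)]
    (p : Fin n → Ω → ℝ) (hmeas : ∀ i, Measurable (p i))
    (hindep : iIndepFun p ℙ)
    (hdist : ∀ i, Measure.map (p i) ℙ = μ) :
    Integrable (fun ω => ∑' k : ℕ, (1 - ∏ i, (1 - p i ω ^ (k + 1)))) ℙ ∧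
    (∫ ω, (∑' k : ℕ, (1 - ∏ i, (1 - p i ω ^ (k + 1)))) ∂ℙ) =
      ∑ k ∈ Finset.Icc 1 n,
        (n.choose k : ℝ) * (-1 : ℝ) ^ (k - 1) * ∑' j : ℕ, (∫ t, t ^ (j + 1) ∂μ) ^ k := by
  classical
  set m : ℕ → ℝ := fun j => ∫ t, t ^ (j + 1) ∂μ with hmdef
  -- a.e. facts
  have hae : ∀ᵐ t ∂μ, t ∈ Set.Icc (0:ℝ) 1 := by
    rw [ae_iff]
    simpa [Set.compl_def] using hsupp
  have haep : ∀ i, ∀ᵐ ω ∂ℙ, p i ω ∈ Set.Icc (0:ℝ) 1 := by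
    intro i
    have h := hae
    rw [← hdist i] at h
    exact (ae_map_iff (hmeas i).aemeasurable measurableSet_Icc).mp h
  have haeΩ : ∀ᵐ ω ∂ℙ, ∀ i, p i ω ∈ Set.Icc (0:ℝ) 1 := ae_all_iff.mpr haep
  -- moments
  have hm_eq : ∀ (i : Fin n) (k : ℕ), ∫ ω, (p i ω) ^ (k+1) ∂ℙ = m k := by
    intro i k
    rw [hmdef]
    simp only
    rw [← hdist i]
    exact (integral_map (f := fun t : ℝ => t ^ (k+1)) (hmeas i).aemeasurable (by fun_prop)).symm
  have hm_nonneg : ∀ k, 0 ≤ m k := fun k =>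
    integral_nonneg_of_ae (hae.mono fun t ht => pow_nonneg ht.1 _)
  have hint_pow_mu : ∀ k : ℕ, Integrable (fun t : ℝ => t ^ (k+1)) μ := by
    intro k
    refine (integrable_const (1:ℝ)).mono'
      ((measurable_id.pow_const _).aestronglyMeasurable) ?_
    filter_upwards [hae] with t ht
    rw [Real.norm_eq_abs, abs_pow]
    exact pow_le_one₀ (abs_nonneg t) (abs_le.mpr ⟨by linarith [ht.1], ht.2⟩)
  have hm_le_one : ∀ k, m k ≤ 1 := by
    intro k
    have h2 : ∫ t, (1:ℝ) ∂μ = 1 := by simp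
    rw [hmdef]; simp only
    rw [← h2]
    refine integral_mono_ae (hint_pow_mu k) (integrable_const 1) ?_
    filter_upwards [hae] with t ht
    exact pow_le_one₀ ht.1 ht.2
  -- the per-k functions
  set f : ℕ → Ω → ℝ := fun k ω => 1 - ∏ i, (1 - p i ω ^ (k+1)) with hfdef
  have hfmeas : ∀ k, Measurable (f k) := fun k =>
    measurable_const.sub (Finset.measurable_prod _ fun i _ =>
      measurable_const.sub ((hmeas i).pow_const _))
  have hfbound : ∀ k, ∀ᵐ ω ∂ℙ, 0 ≤ f k ω ∧ f k ω ≤ 1 := by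
    intro k
    filter_upwards [haeΩ] with ω hω
    have h1 : ∀ i : Fin n, (0:ℝ) ≤ 1 - p i ω ^ (k+1) ∧ 1 - p i ω ^ (k+1) ≤ 1 := by
      intro i
      have := hω i
      constructor
      · nlinarith [pow_le_one₀ this.1 this.2 (n := k+1)]
      · nlinarith [pow_nonneg this.1 (k+1)]
    have hp0 : (0:ℝ) ≤ ∏ i, (1 - p i ω ^ (k+1)) :=
      Finset.prod_nonneg fun i _ => (h1 i).1
    have hp1 : ∏ i, (1 - p i ω ^ (k+1)) ≤ 1 :=
      Finset.prod_le_one (fun i _ => (h1 i).1) (fun i _ => (h1 i).2)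
    constructor <;> simp only [hfdef] <;> [linarith; linarith]
  -- integrability of pieces
  have hint_pow : ∀ (i : Fin n) (k : ℕ), Integrable (fun ω => p i ω ^ (k+1)) ℙ := by
    intro i k
    refine (integrable_const (1:ℝ)).mono'
      (((hmeas i).pow_const _).aestronglyMeasurable) ?_
    filter_upwards [haep i] with ω hω
    rw [Real.norm_eq_abs, abs_pow]
    exact pow_le_one₀ (abs_nonneg _) (abs_le.mpr ⟨by linarith [hω.1], hω.2⟩)
  have hprod_int : ∀ k, Integrable (fun ω => ∏ i, (1 - p i ω ^ (k+1))) ℙ := by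
    intro k
    refine (integrable_const (1:ℝ)).mono'
      ((Finset.measurable_prod _ fun i _ =>
        measurable_const.sub ((hmeas i).pow_const _)).aestronglyMeasurable) ?_
    filter_upwards [haeΩ] with ω hω
    rw [Real.norm_eq_abs, Finset.abs_prod]
    refine Finset.prod_le_one (fun i _ => abs_nonneg _) fun i _ => ?_
    have := hω i
    rw [abs_le]
    constructor
    · nlinarith [pow_le_one₀ this.1 this.2 (n := k+1)]
    · nlinarith [pow_nonneg this.1 (k+1)]
  have hfint : ∀ k, Integrable (f k) ℙ := fun k =>
    (integrable_const 1).sub (hprod_int k)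
  -- value of the per-k integral
  have hIf : ∀ k, ∫ ω, f k ω ∂ℙ = 1 - (1 - m k)^n := by
    intro k
    simp only [hfdef]
    rw [integral_sub (integrable_const 1) (hprod_int k), integral_const, probReal_univ]
    have hprod := indep_integral_prod p hmeas hindep
      (fun i t => 1 - t ^ (k+1)) (fun i => measurable_const.sub (measurable_id.pow_const _))
      Finset.univ
    rw [hprod]
    have hone : ∀ i : Fin n, ∫ ω, (1 - p i ω ^ (k+1)) ∂ℙ = 1 - m k := by
      intro i
      rw [integral_sub (integrable_const 1) (hint_pow i k), integral_const, probReal_univ,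
        hm_eq i k]
      simp
    rw [Finset.prod_congr rfl fun i _ => hone i, Finset.prod_const, Finset.card_univ,
      Fintype.card_fin]
    simp
  have hIf_nonneg : ∀ k, 0 ≤ ∫ ω, f k ω ∂ℙ := fun k =>
    integral_nonneg_of_ae ((hfbound k).mono fun ω h => h.1)
  have hIf_le : ∀ k, ∫ ω, f k ω ∂ℙ ≤ n * m k := by
    intro k
    rw [hIf k]
    have hb := one_add_mul_le_pow (a := -(m k)) (by nlinarith [hm_le_one k]) n
    have : (1 + -(m k)) = 1 - m k := by ring
    rw [this] at hb
    nlinarith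
  have hsum_If : Summable (fun k => ∫ ω, f k ω ∂ℙ) :=
    Summable.of_nonneg_of_le hIf_nonneg hIf_le (hsum.mul_left (n:ℝ))
  -- ENNReal summability of norms
  have hnn : ∀ k, ∫⁻ ω, ‖f k ω‖₊ ∂ℙ = ENNReal.ofReal (∫ ω, f k ω ∂ℙ) := by
    intro k
    rw [ofReal_integral_eq_lintegral_ofReal (hfint k) ((hfbound k).mono fun ω h => h.1)]
    refine lintegral_congr_ae ?_
    filter_upwards [hfbound k] with ω h
    rw [← Real.enorm_eq_ofReal h.1, enorm_eq_nnnorm]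
  have hfin : ∑' k, ∫⁻ ω, ‖f k ω‖₊ ∂ℙ ≠ ⊤ := by
    simp_rw [hnn]
    rw [← ENNReal.ofReal_tsum_of_nonneg hIf_nonneg hsum_If]
    exact ENNReal.ofReal_ne_top
  -- a.e. summability
  have hnmeas : ∀ k, AEMeasurable (fun ω => (‖f k ω‖₊ : ENNReal)) ℙ := fun k =>
    ((hfmeas k).nnnorm.coe_nnreal_ennreal).aemeasurable
  have haesumm : ∀ᵐ ω ∂ℙ, Summable (fun k => f k ω) := by
    have h1 : ∫⁻ ω, ∑' k, (‖f k ω‖₊ : ENNReal) ∂ℙ ≠ ⊤ := by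
      rw [lintegral_tsum hnmeas]
      exact hfin
    filter_upwards [ae_lt_top' (AEMeasurable.ennreal_tsum hnmeas) h1] with ω hω
    have h2 := ENNReal.tsum_coe_ne_top_iff_summable_coe.mp hω.ne
    refine Summable.of_norm ?_
    simpa [coe_nnnorm] using h2
  -- measurability of the tsum
  have hT_meas : AEStronglyMeasurable (fun ω => ∑' k, f k ω) ℙ := by
    refine aestronglyMeasurable_of_tendsto_ae Filter.atTop
      (fun N => (Finset.measurable_sum (Finset.range N) fun k _ =>
        hfmeas k).aestronglyMeasurable) ?_
    filter_upwards [haesumm] with ω hω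
    exact hω.hasSum.tendsto_sum_nat
  -- integrability of the tsum
  have hT_int : Integrable (fun ω => ∑' k, f k ω) ℙ := by
    refine ⟨hT_meas, ?_⟩
    have hle : ∀ᵐ ω ∂ℙ, (‖∑' k, f k ω‖₊ : ENNReal) ≤ ∑' k, (‖f k ω‖₊ : ENNReal) := by
      filter_upwards [haesumm, ae_all_iff.mpr hfbound] with ω hω hb
      have hnns : Summable (fun k => ‖f k ω‖₊) := by
        rw [← NNReal.summable_coe]
        refine hω.congr fun k => ?_
        rw [coe_nnnorm, Real.norm_eq_abs, abs_of_nonneg (hb k).1]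
      calc (‖∑' k, f k ω‖₊ : ENNReal)
          ≤ ((∑' k, ‖f k ω‖₊ : NNReal) : ENNReal) :=
            ENNReal.coe_le_coe.mpr (nnnorm_tsum_le hnns)
        _ = ∑' k, (‖f k ω‖₊ : ENNReal) := ENNReal.coe_tsum hnns
    refine lt_of_le_of_lt (lintegral_mono_ae hle) ?_
    rw [lintegral_tsum hnmeas]
    exact hfin.lt_top
  refine ⟨hT_int, ?_⟩
  rw [integral_tsum (fun k => (hfmeas k).aestronglyMeasurable) hfin]
  -- compute the sum
  have hterm : ∀ k, ∫ ω, f k ω ∂ℙ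
      = ∑ s ∈ Finset.Icc 1 n, (n.choose s : ℝ) * (-1) ^ (s - 1) * (m k) ^ s := by
    intro k
    rw [hIf k, one_sub_one_sub_pow]
  have hsummable_pow : ∀ s ∈ Finset.Icc 1 n, Summable (fun k => (m k) ^ s) := by
    intro s hs
    rw [Finset.mem_Icc] at hs
    refine Summable.of_nonneg_of_le (fun k => pow_nonneg (hm_nonneg k) s)
      (fun k => pow_le_of_le_one (hm_nonneg k) (hm_le_one k) (by omega)) hsum
  calc ∑' k, ∫ ω, f k ω ∂ℙ
      = ∑' k, ∑ s ∈ Finset.Icc 1 n, (n.choose s : ℝ) * (-1) ^ (s - 1) * (m k) ^ s :=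
        tsum_congr hterm
    _ = ∑ s ∈ Finset.Icc 1 n, ∑' k, (n.choose s : ℝ) * (-1) ^ (s - 1) * (m k) ^ s := by
        refine Summable.tsum_finsetSum fun s hs => ?_
        exact (hsummable_pow s hs).mul_left _
    _ = ∑ s ∈ Finset.Icc 1 n, (n.choose s : ℝ) * (-1) ^ (s - 1) * ∑' k, (m k) ^ s := by
        refine Finset.sum_congr rfl fun s hs => ?_
        exact tsum_mul_left
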